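/- Let A0, A1, B0S, B1S, B0L, B1L be self-adjoint operators squaring to the identity with [A_x, B_{yz}] = 0 and [B_{0L}, B_{1L}] = 0. For u ∈ [0, π/4), write c = cos u, s = sin u and define C_{ijS} = Σ_{x,y} (−1)^{δ_{x,i}δ_{y,j}} A_x B_{yS}, J_{ijL} = A0 B_{(0⊕i)L} + (−1)^{j+1} A1 B_{(1⊕i)L}, and the polynomials P1 = −c(c−s)C_{11S} + (c²−s²)J_{11L}, P2 = −c(c+s)C_{01S} + (c²−s²)J_{01L}, P3 = s(c+s)C_{10S} + (c²−s²)J_{10L}, P4 = s(c−s)C_{00S} + (c²−s²)J_{00L}, and I_u = 2·1 − s·C_{11S} − (c−s)·J_{11L}. Then the algebraic identity I_u = (1/4)I_u² + s·P1²/(8c(c²−s²)) + s·P2²/(8c(c+s)²) + P3²/(8(c+s)²) + P4²/(8(c²−s²)) holds. -/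

import Mathlib

open Real

private lemma mlc {A : Type*} [Ring A] {a b : A} (h : Commute a b) (x : A) :
    b * (a * x) = a * (b * x) := by rw [← mul_assoc, ← h.eq, mul_assoc]

private lemma sqc {A : Type*} [Ring A] {a : A} (h : a * a = 1) (x : A) :
    a * (a * x) = x := by rw [← mul_assoc, h, one_mul]

set_option maxHeartbeats 2000000 in
/-- The sum-of-squares identity certifying the SRQ bound
`sin u·C_S + (cos u − sin u)·J_L ≤ 2` for `u ∈ [0, π/4)`. -/
theorem stmt7 {A : Type*} [Ring A] [Algebra ℝ A]
    (A0 A1 B0S B1S B0L B1L : A)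
    (hA0sq : A0 * A0 = 1) (hA1sq : A1 * A1 = 1)
    (hB0Ssq : B0S * B0S = 1) (hB1Ssq : B1S * B1S = 1)
    (hB0Lsq : B0L * B0L = 1) (hB1Lsq : B1L * B1L = 1)
    (hc00S : Commute A0 B0S) (hc01S : Commute A0 B1S)
    (hc10S : Commute A1 B0S) (hc11S : Commute A1 B1S)
    (hc00L : Commute A0 B0L) (hc01L : Commute A0 B1L)
    (hc10L : Commute A1 B0L) (hc11L : Commute A1 B1L)
    (hBL : Commute B0L B1L)
    (u : ℝ) (hu : u ∈ Set.Ico 0 (π / 4))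
    (c s : ℝ) (hc : c = Real.cos u) (hs : s = Real.sin u)
    (C11S C01S C10S C00S J11L J01L J10L J00L Iu P1 P2 P3 P4 : A)
    (hC11S : C11S = A0 * B0S + A0 * B1S + A1 * B0S - A1 * B1S)
    (hC01S : C01S = A0 * B0S - A0 * B1S + A1 * B0S + A1 * B1S)
    (hC10S : C10S = A0 * B0S + A0 * B1S - A1 * B0S + A1 * B1S)
    (hC00S : C00S = -(A0 * B0S) + A0 * B1S + A1 * B0S + A1 * B1S)
    (hJ11L : J11L = A0 * B1L + A1 * B0L)
    (hJ01L : J01L = A0 * B0L + A1 * B1L)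
    (hJ10L : J10L = A0 * B1L - A1 * B0L)
    (hJ00L : J00L = A0 * B0L - A1 * B1L)
    (hP1 : P1 = (-(c * (c - s))) • C11S + (c ^ 2 - s ^ 2) • J11L)
    (hP2 : P2 = (-(c * (c + s))) • C01S + (c ^ 2 - s ^ 2) • J01L)
    (hP3 : P3 = (s * (c + s)) • C10S + (c ^ 2 - s ^ 2) • J10L)
    (hP4 : P4 = (s * (c - s)) • C00S + (c ^ 2 - s ^ 2) • J00L)
    (hIu : Iu = (2 : A) - s • C11S - (c - s) • J11L) :
    Iu = (1 / 4 : ℝ) • Iu ^ 2 +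
      (s / (8 * c * (c ^ 2 - s ^ 2))) • P1 ^ 2 +
      (s / (8 * c * (c + s) ^ 2)) • P2 ^ 2 +
      (1 / (8 * (c + s) ^ 2)) • P3 ^ 2 +
      (1 / (8 * (c ^ 2 - s ^ 2))) • P4 ^ 2 := by
  obtain ⟨hu0, hu1⟩ := hu
  have hπ : (0:ℝ) < π := Real.pi_pos
  have hc0 : 0 < c := by
    rw [hc]
    exact Real.cos_pos_of_mem_Ioo ⟨by linarith, by linarith⟩
  have hs0 : 0 ≤ s := by
    rw [hs]
    exact Real.sin_nonneg_of_nonneg_of_le_pi hu0 (by linarith)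
  have hsc : s < c := by
    have h1 : Real.sin u < Real.sin (π / 4) :=
      Real.sin_lt_sin_of_lt_of_le_pi_div_two (by linarith) (by linarith) hu1
    have h2 : Real.cos (π / 4) < Real.cos u ∨ u = 0 := by
      rcases lt_or_eq_of_le hu0 with h | h
      · exact Or.inl (Real.cos_lt_cos_of_nonneg_of_le_pi (by linarith) (by linarith) hu1)
      · exact Or.inr h.symm
    rw [hs, hc]
    rcases h2 with h2 | h2
    · rw [Real.sin_pi_div_four] at h1
      rw [Real.cos_pi_div_four] at h2
      linarith
    · subst h2
      simp only [Real.sin_zero, Real.cos_zero]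
      norm_num
  have hs2 : s ^ 2 = 1 - c ^ 2 := by
    rw [hs, hc]
    have := Real.sin_sq_add_cos_sq u
    linarith
  have hcsp : 0 < c + s := by linarith
  have hq : 0 < c ^ 2 - s ^ 2 := by nlinarith
  have hDpos : 0 < 8 * c * (c + s) ^ 2 * (c ^ 2 - s ^ 2) :=
    mul_pos (mul_pos (mul_pos (by norm_num) hc0) (pow_pos hcsp 2)) hq
  have hD : (8 * c * (c + s) ^ 2 * (c ^ 2 - s ^ 2)) ≠ 0 := hDpos.ne'
  have key : (8 * c * (c + s) ^ 2 * (c ^ 2 - s ^ 2)) • Iu =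
      (2 * c * (c + s) ^ 2 * (c ^ 2 - s ^ 2)) • Iu ^ 2 +
      (s * (c + s) ^ 2) • P1 ^ 2 + (s * (c ^ 2 - s ^ 2)) • P2 ^ 2 +
      (c * (c ^ 2 - s ^ 2)) • P3 ^ 2 + (c * (c + s) ^ 2) • P4 ^ 2 := by
    have h2 : (2 : A) = (2 : ℝ) • (1 : A) := by rw [two_smul]; norm_num
    rw [hIu, hP1, hP2, hP3, hP4, hC11S, hC01S, hC10S, hC00S, hJ11L, hJ01L, hJ10L, hJ00L, h2]
    simp only [pow_two]
    simp only [mul_add, add_mul, mul_sub, sub_mul, smul_add, smul_sub, smul_smul,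
      smul_mul_assoc, mul_smul_comm, mul_assoc, mul_one, one_mul, mul_neg, neg_mul,
      smul_neg, neg_smul, neg_neg,
      hA0sq, hA1sq, hB0Ssq, hB1Ssq, hB0Lsq, hB1Lsq,
      sqc hA0sq, sqc hA1sq, sqc hB0Ssq, sqc hB1Ssq, sqc hB0Lsq, sqc hB1Lsq,
      mlc hc00S, mlc hc01S, mlc hc10S, mlc hc11S,
      mlc hc00L, mlc hc01L, mlc hc10L, mlc hc11L,
      ← hc00S.eq, ← hc01S.eq, ← hc10S.eq, ← hc11S.eq,
      ← hc00L.eq, ← hc01L.eq, ← hc10L.eq, ← hc11L.eq,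
      mlc hBL, ← hBL.eq]
    match_scalars <;> (try ring) <;>
      linear_combination (8*c*s^4 + 16*c^2*s^3 - 16*c^4*s - 8*c^5) * hs2
  have hcne : c ≠ 0 := hc0.ne'
  have hcsne : c + s ≠ 0 := hcsp.ne'
  have hqne : c ^ 2 - s ^ 2 ≠ 0 := hq.ne'
  calc Iu = ((8 * c * (c + s) ^ 2 * (c ^ 2 - s ^ 2))⁻¹ *
          (8 * c * (c + s) ^ 2 * (c ^ 2 - s ^ 2))) • Iu := by
        rw [inv_mul_cancel₀ hD, one_smul]
    _ = (8 * c * (c + s) ^ 2 * (c ^ 2 - s ^ 2))⁻¹ •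
          ((8 * c * (c + s) ^ 2 * (c ^ 2 - s ^ 2)) • Iu) := by rw [mul_smul]
    _ = (8 * c * (c + s) ^ 2 * (c ^ 2 - s ^ 2))⁻¹ •
          ((2 * c * (c + s) ^ 2 * (c ^ 2 - s ^ 2)) • Iu ^ 2 +
      (s * (c + s) ^ 2) • P1 ^ 2 + (s * (c ^ 2 - s ^ 2)) • P2 ^ 2 +
      (c * (c ^ 2 - s ^ 2)) • P3 ^ 2 + (c * (c + s) ^ 2) • P4 ^ 2) := by rw [key]
    _ = (1 / 4 : ℝ) • Iu ^ 2 +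
      (s / (8 * c * (c ^ 2 - s ^ 2))) • P1 ^ 2 +
      (s / (8 * c * (c + s) ^ 2)) • P2 ^ 2 +
      (1 / (8 * (c + s) ^ 2)) • P3 ^ 2 +
      (1 / (8 * (c ^ 2 - s ^ 2))) • P4 ^ 2 := by
        simp only [smul_add, smul_smul]
        match_scalars <;> (field_simp <;> ring)
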